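/- Let r > 2 and let d_1,...,d_r be integers each at least 2 such that there exist q_i with gcd(q_i,d_i)=1, 1 ≤ q_i ≤ d_i - 1, and Σ q_i/d_i ∈ ℤ. Then the orbifold Euler characteristic χ := 2 - Σ_{i=1}^r (1 - 1/d_i) satisfies χ ≤ 0. -/
import Mathlib


/-- Let `r > 2` and `d 1, ..., d r ≥ 2` admit integers `q i` with `gcd (q i) (d i) = 1`,
`1 ≤ q i ≤ d i - 1`, and `∑ q i / d i ∈ ℤ`.  Then the orbifold Euler characteristic
`2 - ∑ (1 - 1/(d i))` is nonpositive. -/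
theorem orbifold_euler_char_nonpos (r : ℕ) (hr : 2 < r)
    (d : Fin r → ℤ) (hd : ∀ i, 2 ≤ d i)
    (q : Fin r → ℤ) (hcop : ∀ i, Int.gcd (q i) (d i) = 1)
    (hq1 : ∀ i, 1 ≤ q i) (hq2 : ∀ i, q i ≤ d i - 1)
    (hsum : ∃ z : ℤ, ∑ i, (q i : ℚ) / (d i : ℚ) = (z : ℚ)) :
    2 - ∑ i, (1 - 1/(d i : ℚ)) ≤ 0 := by
  obtain ⟨z, hz⟩ := hsum
  have hd0 : ∀ i, (0:ℚ) < (d i : ℚ) := fun i => by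
    have := hd i; exact_mod_cast lt_of_lt_of_le (by norm_num) this
  -- upper bound: each q i / d i ≤ 1 - 1/d i
  have h1 : (z:ℚ) ≤ ∑ i, (1 - 1/(d i:ℚ)) := by
    rw [← hz]
    apply Finset.sum_le_sum
    intro i _
    have hq : (q i : ℚ) ≤ (d i : ℚ) - 1 := by exact_mod_cast hq2 i
    rw [div_le_iff₀ (hd0 i)]
    have h := hd0 i
    field_simp
    nlinarith [hd0 i]
  -- lower bound: each 1 - q i / d i ≤ 1 - 1/d i
  have h2 : (r:ℚ) - z ≤ ∑ i, (1 - 1/(d i:ℚ)) := by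
    have : (r:ℚ) - z = ∑ i, (1 - (q i : ℚ)/(d i : ℚ)) := by
      rw [Finset.sum_sub_distrib, hz, Finset.sum_const, Finset.card_univ, Fintype.card_fin]
      push_cast; ring
    rw [this]
    apply Finset.sum_le_sum
    intro i _
    have hq : (1:ℚ) ≤ (q i : ℚ) := by exact_mod_cast hq1 i
    have h : (1:ℚ)/(d i:ℚ) ≤ (q i:ℚ)/(d i:ℚ) := by gcongr; exact le_of_lt (hd0 i)
    linarith
  -- z ≥ 1
  have hzpos : 1 ≤ z := by
    have hpos : (0:ℚ) < ∑ i, (q i : ℚ) / (d i : ℚ) := by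
      apply Finset.sum_pos
      · intro i _
        exact div_pos (by exact_mod_cast lt_of_lt_of_le one_pos (hq1 i)) (hd0 i)
      · exact Finset.univ_nonempty_iff.mpr ⟨⟨0, by omega⟩⟩
    rw [hz] at hpos
    exact_mod_cast hpos
  have hr3 : (3:ℚ) ≤ (r:ℚ) := by exact_mod_cast hr
  by_cases h : 2 ≤ z
  · have : (2:ℚ) ≤ (z:ℚ) := by exact_mod_cast h
    linarith
  · have hz1 : z = 1 := by omega
    subst hz1
    push_cast at h2 ⊢
    linarith
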